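/- Let w_0 : X → X be the ℤ-linear involution given by w_0(δ_i) = δ_{m+1−i} (1 ≤ i ≤ m) and w_0(ε_j) = ε_{n+1−j} (1 ≤ j ≤ n), i.e. the longest element of the Weyl group W = S_m × S_n. Then w_0 maps Π^{(mn)} onto −Π = {−α : α ∈ Π}. Equivalently, the longest element ŵ_ℓ = w_0 w_1 of the super Weyl group, where w_1 = r̂_{β_mn} ∘ ⋯ ∘ r̂_{β_1}, sends the standard simple system Π to −Π. -/
import Mathlib


open scoped BigOperators

noncomputable section

/-- The weight space of `GL(m|n)` with rational coefficients. -/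
abbrev Vmn (m n : ℕ) := (Fin m ⊕ Fin n) → ℚ

/-- `dd m n s` is the basis vector `δ_{s+1}` (0-indexed `s`). -/
def dd (m n : ℕ) (s : ℕ) : Vmn m n := fun x =>
  match x with
  | Sum.inl a => if (a : ℕ) = s then 1 else 0
  | Sum.inr _ => 0

/-- `ee m n t` is the basis vector `ε_{t+1}` (0-indexed `t`). -/
def ee (m n : ℕ) (t : ℕ) : Vmn m n := fun x =>
  match x with
  | Sum.inl _ => 0
  | Sum.inr b => if (b : ℕ) = t then 1 else 0

/-- The symmetric bilinear form with `(δ_i,δ_j) = δ_{ij}`, `(ε_i,ε_j) = -δ_{ij}`,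
`(δ_i,ε_j) = 0`. -/
def Bform (m n : ℕ) (f g : Vmn m n) : ℚ :=
  (∑ a : Fin m, f (Sum.inl a) * g (Sum.inl a))
    - ∑ b : Fin n, f (Sum.inr b) * g (Sum.inr b)

/-- The `i`-th positive odd root (for `1 ≤ i ≤ mn`): `β_{kn+l} = δ_{m-k} - ε_l`. -/
def betaRoot (m n : ℕ) (i : ℕ) : Vmn m n :=
  dd m n (m - 1 - (i - 1) / n) - ee m n ((i - 1) % n)

/-- The standard simple system
`Π = {δ_1-δ_2, …, δ_{m-1}-δ_m, δ_m-ε_1, ε_1-ε_2, …, ε_{n-1}-ε_n}`. -/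
def stdSimple (m n : ℕ) : Set (Vmn m n) :=
  {v | ∃ s, s + 1 < m ∧ v = dd m n s - dd m n (s + 1)} ∪
    {dd m n (m - 1) - ee m n 0} ∪
    {v | ∃ t, t + 1 < n ∧ v = ee m n t - ee m n (t + 1)}

/-- The odd reflection `r̂_β` applied to a set `S`. -/
def oddRefl (m n : ℕ) (β : Vmn m n) (S : Set (Vmn m n)) : Set (Vmn m n) :=
  {α | α ∈ S ∧ α ≠ β ∧ Bform m n α β = 0} ∪
    {γ | ∃ α ∈ S, Bform m n α β ≠ 0 ∧ γ = α + β} ∪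
    {-β}

/-- `simpleSys m n i = Π^{(i)}`, obtained from `Π` by the odd reflections
`r̂_{β_1}, …, r̂_{β_i}`. -/
def simpleSys (m n : ℕ) : ℕ → Set (Vmn m n)
  | 0 => stdSimple m n
  | i + 1 => oddRefl m n (betaRoot m n (i + 1)) (simpleSys m n i)


/-- The longest element `w_0` of the Weyl group `W = S_m × S_n`, acting ℤ-linearly on the
weight space by `w_0(δ_i) = δ_{m+1-i}` and `w_0(ε_j) = ε_{n+1-j}`. -/
def wZero (m n : ℕ) (f : Vmn m n) : Vmn m n := fun x =>
  match x with
  | Sum.inl a => f (Sum.inl ⟨m - 1 - (a : ℕ), by have := a.isLt; omega⟩)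
  | Sum.inr b => f (Sum.inr ⟨n - 1 - (b : ℕ), by have := b.isLt; omega⟩)

lemma sum_ite_mul_ite (N : ℕ) (a a' : ℕ) :
    (∑ x : Fin N, (if (x:ℕ) = a then (1:ℚ) else 0) * (if (x:ℕ) = a' then 1 else 0))
      = if a = a' ∧ a < N then 1 else 0 := by
  by_cases ha : a < N
  · have h : ∀ x : Fin N, (if (x:ℕ) = a then (1:ℚ) else 0) * (if (x:ℕ) = a' then 1 else 0)
        = if x = ⟨a, ha⟩ then (if a = a' ∧ a < N then 1 else 0) else 0 := by
      intro x
      rcases eq_or_ne (x:ℕ) a with h1 | h1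
      · have hx : x = ⟨a, ha⟩ := Fin.ext h1
        subst hx
        by_cases h2 : a = a'
        · simp [h2, show a' < N from h2 ▸ ha]
        · simp [h2]
      · rw [if_neg h1, zero_mul, if_neg (fun hx : x = ⟨a, ha⟩ => h1 (by rw [hx]))]
    simp [h, Finset.sum_ite_eq']
  · have h0 : ∀ x : Fin N, (if (x:ℕ) = a then (1:ℚ) else 0) = 0 :=
      fun x => if_neg (by have := x.isLt; omega)
    simp only [h0, zero_mul, Finset.sum_const_zero]
    rw [if_neg (by tauto)]

lemma B_dd_dd (m n a a' : ℕ) :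
    Bform m n (dd m n a) (dd m n a') = if a = a' ∧ a < m then 1 else 0 := by
  simp only [Bform, dd]
  rw [sum_ite_mul_ite]
  simp

lemma B_ee_ee (m n b b' : ℕ) :
    Bform m n (ee m n b) (ee m n b') = if b = b' ∧ b < n then -1 else 0 := by
  simp only [Bform, ee]
  rw [sum_ite_mul_ite]
  split_ifs <;> simp

lemma B_dd_ee (m n a b : ℕ) : Bform m n (dd m n a) (ee m n b) = 0 := by
  simp [Bform, dd, ee]

lemma B_ee_dd (m n a b : ℕ) : Bform m n (ee m n b) (dd m n a) = 0 := by
  simp [Bform, dd, ee]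

lemma sum_sub_mul_sub (N : ℕ) (F G H K : Fin N → ℚ) :
    ∑ x, (F x - G x) * (H x - K x)
      = (∑ x, F x * H x) - (∑ x, F x * K x) - (∑ x, G x * H x) + (∑ x, G x * K x) := by
  rw [← Finset.sum_sub_distrib, ← Finset.sum_sub_distrib, ← Finset.sum_add_distrib]
  exact Finset.sum_congr rfl fun x _ => by ring

lemma Bform_sub_sub (m n : ℕ) (f g h k : Vmn m n) :
    Bform m n (f - g) (h - k) =
      Bform m n f h - Bform m n f k - Bform m n g h + Bform m n g k := by
  simp only [Bform, Pi.sub_apply]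
  rw [sum_sub_mul_sub, sum_sub_mul_sub]
  ring

def D (m n k l j : ℕ) : Vmn m n :=
  if j + 1 + k < m then dd m n j
  else if j < m - 1 - k + l then ee m n (j - (m - 1 - k))
  else if j = m - 1 - k + l then dd m n (m - 1 - k)
  else if j < m + n - k then ee m n (j - (m - k))
  else dd m n (j - n)

lemma D_at_p (m n k l : ℕ) (hk : k < m) (hl : l ≤ n) :
    D m n k l (m - 1 - k + l) = dd m n (m - 1 - k) := by
  unfold D
  split_ifs <;> first | rfl | (exfalso; omega) | (exact congrArg (dd m n) (by omega)) | (exact congrArg (ee m n) (by omega))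

lemma D_at_p1 (m n k l : ℕ) (hk : k < m) (hl : l < n) :
    D m n k l (m - 1 - k + l + 1) = ee m n l := by
  unfold D
  split_ifs <;> first | rfl | (exfalso; omega) | (exact congrArg (dd m n) (by omega)) | (exact congrArg (ee m n) (by omega))

lemma B_D_dd (m n k l : ℕ) (hk : k < m) (hl : l ≤ n) (j : ℕ) (hj : j < m + n) :
    Bform m n (D m n k l j) (dd m n (m - 1 - k)) = if j = m - 1 - k + l then 1 else 0 := by
  unfold D
  split_ifs <;>
    first
    | (exfalso; omega)
    | simp only [B_ee_dd, B_dd_ee]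
    | (rw [B_dd_dd, if_pos (by omega)])
    | (rw [B_dd_dd, if_neg (by omega)])
    | (rw [B_ee_ee, if_pos (by omega)])
    | (rw [B_ee_ee, if_neg (by omega)])

lemma B_D_ee (m n k l : ℕ) (hk : k < m) (hl : l < n) (j : ℕ) (hj : j < m + n) :
    Bform m n (D m n k l j) (ee m n l) = if j = m - 1 - k + l + 1 then -1 else 0 := by
  unfold D
  split_ifs <;>
    first
    | (exfalso; omega)
    | simp only [B_ee_dd, B_dd_ee]
    | (rw [B_dd_dd, if_pos (by omega)])
    | (rw [B_dd_dd, if_neg (by omega)])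
    | (rw [B_ee_ee, if_pos (by omega)])
    | (rw [B_ee_ee, if_neg (by omega)])

lemma D_swap (m n k l : ℕ) (hk : k < m) (hl : l < n) (j : ℕ) :
    D m n k (l + 1) j =
      if j = m - 1 - k + l then ee m n l
      else if j = m - 1 - k + l + 1 then dd m n (m - 1 - k)
      else D m n k l j := by
  unfold D
  split_ifs <;> first | rfl | (exfalso; omega) | (exact congrArg (dd m n) (by omega)) | (exact congrArg (ee m n) (by omega))

lemma D_row (m n k : ℕ) (hk : k + 1 < m) (j : ℕ) :
    D m n k n j = D m n (k + 1) 0 j := by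
  unfold D
  split_ifs <;> first | rfl | (exfalso; omega) | (exact congrArg (dd m n) (by omega)) | (exact congrArg (ee m n) (by omega))

lemma Bform_zero_right (m n : ℕ) (f : Vmn m n) : Bform m n f 0 = 0 := by
  simp [Bform]

lemma Bform_sub_left (m n : ℕ) (f g h : Vmn m n) :
    Bform m n (f - g) h = Bform m n f h - Bform m n g h := by
  have := Bform_sub_sub m n f g h 0
  rw [sub_zero] at this
  rw [this, Bform_zero_right, Bform_zero_right]
  ring

lemma oddRefl_swap (m n N p : ℕ) (v w : ℕ → Vmn m n) (hp : p + 2 ≤ N)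
    (h1 : ∀ j, j < N → Bform m n (v j) (v p) = if j = p then 1 else 0)
    (h2 : ∀ j, j < N → Bform m n (v j) (v (p+1)) = if j = p+1 then -1 else 0)
    (hw : ∀ j, w j = if j = p then v (p+1) else if j = p+1 then v p else v j) :
    oddRefl m n (v p - v (p+1)) {α | ∃ j, j + 1 < N ∧ α = v j - v (j+1)}
      = {α | ∃ j, j + 1 < N ∧ α = w j - w (j+1)} := by
  have key : ∀ j, j + 1 < N → Bform m n (v j - v (j+1)) (v p - v (p+1)) =
      (if j + 1 = p then (-1:ℚ) else 0) + (if j = p + 1 then 1 else 0) := by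
    intro j hj
    rw [Bform_sub_sub, h1 j (by omega), h2 j (by omega), h1 (j+1) (by omega),
      h2 (j+1) (by omega)]
    split_ifs <;> first | (exfalso; omega) | norm_num
  have vne : ∀ j, j + 1 < N → j ≠ p → v j - v (j+1) ≠ v p - v (p+1) := by
    intro j hj hne heq
    have e1 := congrArg (fun x => Bform m n x (v p)) heq
    simp only [Bform_sub_left] at e1
    rw [h1 j (by omega), h1 (j+1) (by omega), h1 p (by omega), h1 (p+1) (by omega)] at e1
    split_ifs at e1 <;> first | omega | norm_num at e1
  ext α
  simp only [oddRefl, Set.mem_union, Set.mem_setOf_eq, Set.mem_singleton_iff]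
  constructor
  · rintro ((⟨⟨j, hj, rfl⟩, hne, hB0⟩ | ⟨α', ⟨j, hj, rfl⟩, hBne, rfl⟩) | rfl)
    · -- kept roots
      rw [key j hj] at hB0
      have hjp : j ≠ p := fun h => hne (by rw [h])
      have hA : j + 1 ≠ p := by
        intro h; rw [if_pos h, if_neg (by omega)] at hB0; norm_num at hB0
      have hB : j ≠ p + 1 := by
        intro h; rw [if_neg (by omega), if_pos h] at hB0; norm_num at hB0
      refine ⟨j, hj, ?_⟩
      rw [hw j, hw (j+1), if_neg hjp, if_neg hB, if_neg hA,
        if_neg (fun h : j + 1 = p + 1 => hjp (by omega))]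
    · -- reflected roots
      rw [key j hj] at hBne
      by_cases hA : j + 1 = p
      · refine ⟨j, by omega, ?_⟩
        rw [hw j, hw (j+1), if_neg (by omega), if_neg (by omega), if_pos hA,
          show v (j+1) = v p from by rw [hA]]
        abel
      · by_cases hB : j = p + 1
        · refine ⟨p + 1, by omega, ?_⟩
          rw [hw (p+1), hw (p+2), if_neg (by omega), if_pos rfl, if_neg (by omega),
            if_neg (by omega), hB]
          abel
        · exfalso; apply hBne; rw [if_neg hA, if_neg hB]; norm_num
    · -- the new simple root -β
      refine ⟨p, by omega, ?_⟩
      rw [hw p, hw (p+1), if_pos rfl, if_neg (by omega), if_pos rfl, neg_sub]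
  · rintro ⟨j, hj, rfl⟩
    by_cases hjp : j = p
    · right
      subst hjp
      rw [hw j, hw (j+1), if_pos rfl, if_neg (by omega), if_pos rfl, neg_sub]
    · by_cases hA : j + 1 = p
      · left; right
        refine ⟨v j - v (j+1), ⟨j, hj, rfl⟩, ?_, ?_⟩
        · rw [key j hj, if_pos hA, if_neg (by omega)]; norm_num
        · rw [hw j, hw (j+1), if_neg hjp, if_neg (by omega), if_pos hA,
            show v (j+1) = v p from by rw [hA]]
          abel
      · by_cases hB : j = p + 1
        · left; right
          refine ⟨v j - v (j+1), ⟨j, hj, rfl⟩, ?_, ?_⟩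
          · rw [key j hj, if_neg hA, if_pos hB]; norm_num
          · rw [hw j, hw (j+1), if_neg hjp, if_pos hB, if_neg (by omega),
              if_neg (by omega), hB]
            abel
        · left; left
          rw [hw j, hw (j+1), if_neg hjp, if_neg hB, if_neg hA,
            if_neg (fun h : j + 1 = p + 1 => hjp (by omega))]
          refine ⟨⟨j, hj, rfl⟩, vne j hj hjp, ?_⟩
          rw [key j hj, if_neg hA, if_neg hB]; norm_num

def diffSet (m n k l : ℕ) : Set (Vmn m n) :=
  {v | ∃ j, j + 1 < m + n ∧ v = D m n k l j - D m n k l (j + 1)}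

lemma simpleSys_succ (m n i : ℕ) :
    simpleSys m n (i + 1) = oddRefl m n (betaRoot m n (i + 1)) (simpleSys m n i) := rfl

lemma betaRoot_eq (m n k l : ℕ) (hl : l < n) :
    betaRoot m n (k * n + l + 1) = dd m n (m - 1 - k) - ee m n l := by
  have e1 : (k * n + l + 1 - 1) / n = k := by
    simp only [Nat.add_sub_cancel]
    rw [mul_comm, Nat.mul_add_div (by omega)]
    simp [Nat.div_eq_of_lt hl]
  have e2 : (k * n + l + 1 - 1) % n = l := by
    simp only [Nat.add_sub_cancel]
    rw [mul_comm, Nat.mul_add_mod]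
    exact Nat.mod_eq_of_lt hl
  rw [betaRoot, e1, e2]

lemma step (m n k l : ℕ) (hk : k < m) (hl : l < n) :
    oddRefl m n (betaRoot m n (k * n + l + 1)) (diffSet m n k l) = diffSet m n k (l + 1) := by
  rw [betaRoot_eq m n k l hl]
  have hdd : dd m n (m - 1 - k) = D m n k l (m - 1 - k + l) := (D_at_p m n k l hk hl.le).symm
  have hee : ee m n l = D m n k l (m - 1 - k + l + 1) := (D_at_p1 m n k l hk hl).symm
  rw [hdd, hee]
  have h1 : ∀ j, j < m + n →
      Bform m n (D m n k l j) (D m n k l (m - 1 - k + l)) =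
        if j = m - 1 - k + l then 1 else 0 := by
    intro j hj
    rw [← hdd, B_D_dd m n k l hk hl.le j hj]
  have h2 : ∀ j, j < m + n →
      Bform m n (D m n k l j) (D m n k l (m - 1 - k + l + 1)) =
        if j = m - 1 - k + l + 1 then -1 else 0 := by
    intro j hj
    rw [← hee, B_D_ee m n k l hk hl j hj]
  have hw : ∀ j, D m n k (l + 1) j =
      if j = m - 1 - k + l then D m n k l (m - 1 - k + l + 1)
      else if j = m - 1 - k + l + 1 then D m n k l (m - 1 - k + l)
      else D m n k l j := by
    intro j
    rw [D_swap m n k l hk hl j, hdd, hee]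
  exact oddRefl_swap m n (m + n) (m - 1 - k + l) (D m n k l) (D m n k (l + 1))
    (by omega) h1 h2 hw

lemma D00_lt (m n j : ℕ) (hj : j < m) : D m n 0 0 j = dd m n j := by
  unfold D
  split_ifs <;> first | rfl | (exfalso; omega) | (exact congrArg (dd m n) (by omega))

lemma D00_ge (m n j : ℕ) (hm : 1 ≤ m) (h1 : m ≤ j) (h2 : j < m + n) : D m n 0 0 j = ee m n (j - m) := by
  unfold D
  split_ifs <;> first | rfl | (exfalso; omega) | (exact congrArg (ee m n) (by omega))

lemma base (m n : ℕ) (hm : 1 ≤ m) (hn : 1 ≤ n) : stdSimple m n = diffSet m n 0 0 := by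
  ext v
  simp only [stdSimple, diffSet, Set.mem_union, Set.mem_setOf_eq, Set.mem_singleton_iff]
  constructor
  · rintro ((⟨s, hs, rfl⟩ | rfl) | ⟨t, ht, rfl⟩)
    · exact ⟨s, by omega, by rw [D00_lt m n s (by omega), D00_lt m n (s + 1) hs]⟩
    · refine ⟨m - 1, by omega, ?_⟩
      rw [show m - 1 + 1 = m from by omega, D00_lt m n (m - 1) (by omega),
        D00_ge m n m hm (by omega) (by omega), show m - m = 0 from by omega]
    · refine ⟨m + t, by omega, ?_⟩
      rw [D00_ge m n (m + t) hm (by omega) (by omega),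
        D00_ge m n (m + t + 1) hm (by omega) (by omega),
        show m + t - m = t from by omega, show m + t + 1 - m = t + 1 from by omega]
  · rintro ⟨j, hj, rfl⟩
    by_cases hc1 : j + 1 < m
    · left; left
      exact ⟨j, hc1, by rw [D00_lt m n j (by omega), D00_lt m n (j + 1) hc1]⟩
    · by_cases hc2 : j + 1 = m
      · left; right
        rw [show j = m - 1 from by omega, show m - 1 + 1 = m from by omega,
          D00_lt m n (m - 1) (by omega), D00_ge m n m hm (by omega) (by omega),
          show m - m = 0 from by omega]
      · right
        refine ⟨j - m, by omega, ?_⟩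
        rw [D00_ge m n j hm (by omega) (by omega), D00_ge m n (j + 1) hm (by omega) (by omega),
          show j + 1 - m = j - m + 1 from by omega]

lemma col (m n k : ℕ) (hk : k < m)
    (hbase : simpleSys m n (k * n) = diffSet m n k 0) :
    ∀ l, l ≤ n → simpleSys m n (k * n + l) = diffSet m n k l := by
  intro l
  induction l with
  | zero => intro _; exact hbase
  | succ l ih =>
    intro hl
    have h := step m n k l hk (by omega)
    rw [← ih (by omega)] at h
    rw [show k * n + (l + 1) = (k * n + l) + 1 from rfl, simpleSys_succ]
    exact h

lemma rows (m n : ℕ) (hm : 1 ≤ m) (hn : 1 ≤ n) :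
    ∀ k, k < m → simpleSys m n (k * n) = diffSet m n k 0 := by
  intro k
  induction k with
  | zero =>
    intro _
    rw [Nat.zero_mul]
    exact base m n hm hn
  | succ k ihk =>
    intro hk
    have h1 : simpleSys m n (k * n + n) = diffSet m n k n :=
      col m n k (by omega) (ihk (by omega)) n le_rfl
    have h2 : diffSet m n k n = diffSet m n (k + 1) 0 := by
      simp only [diffSet, D_row m n k hk]
    rw [show (k + 1) * n = k * n + n from by ring, h1, h2]

lemma main (m n : ℕ) (hm : 1 ≤ m) (hn : 1 ≤ n) (k : ℕ) (hk : k < m) (l : ℕ) (hl : l ≤ n) :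
    simpleSys m n (k * n + l) = diffSet m n k l :=
  col m n k hk (rows m n hm hn k hk) l hl

lemma final_sys (m n : ℕ) (hm : 1 ≤ m) (hn : 1 ≤ n) :
    simpleSys m n (m * n) = diffSet m n (m - 1) n := by
  obtain ⟨m', rfl⟩ : ∃ m', m = m' + 1 := ⟨m - 1, by omega⟩
  have h := main (m' + 1) n hm hn m' (by omega) n le_rfl
  rw [show (m' + 1) * n = m' * n + n from by ring, show m' + 1 - 1 = m' from by omega]
  exact h

lemma wZero_sub (m n : ℕ) (f g : Vmn m n) :
    wZero m n (f - g) = wZero m n f - wZero m n g := by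
  funext x
  cases x <;> rfl

lemma wZero_dd (m n a : ℕ) (ha : a < m) :
    wZero m n (dd m n a) = dd m n (m - 1 - a) := by
  funext x
  cases x with
  | inl a' =>
    show (if (m - 1 - (a' : ℕ) : ℕ) = a then (1:ℚ) else 0)
      = if ((a' : ℕ)) = m - 1 - a then 1 else 0
    have h := a'.isLt
    rw [if_congr (show (m - 1 - (a' : ℕ) = a) ↔ ((a' : ℕ) = m - 1 - a) from by omega) rfl rfl]
  | inr b => rfl

lemma wZero_ee (m n b : ℕ) (hb : b < n) :
    wZero m n (ee m n b) = ee m n (n - 1 - b) := by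
  funext x
  cases x with
  | inl a => rfl
  | inr b' =>
    show (if (n - 1 - (b' : ℕ) : ℕ) = b then (1:ℚ) else 0)
      = if ((b' : ℕ)) = n - 1 - b then 1 else 0
    have h := b'.isLt
    rw [if_congr (show (n - 1 - (b' : ℕ) = b) ↔ ((b' : ℕ) = n - 1 - b) from by omega) rfl rfl]

lemma Dfin_lt (m n j : ℕ) (hm : 1 ≤ m) (hj : j < n) : D m n (m - 1) n j = ee m n j := by
  unfold D
  split_ifs <;> first | rfl | (exfalso; omega) | (exact congrArg (ee m n) (by omega))

lemma Dfin_ge (m n j : ℕ) (hm : 1 ≤ m) (hj : n ≤ j) : D m n (m - 1) n j = dd m n (j - n) := by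
  unfold D
  split_ifs <;> first | rfl | (exfalso; omega) | (exact congrArg (dd m n) (by omega))


/-- The longest element `w_0` of the Weyl group maps `Π^{(mn)}` onto `-Π`; equivalently,
the longest element `ŵ_ℓ = w_0 w_1` of the super Weyl group, where
`w_1 = r̂_{β_{mn}} ∘ ⋯ ∘ r̂_{β_1}`, sends the standard simple system `Π` to `-Π`. -/
theorem statement2 (m n : ℕ) (hm : 1 ≤ m) (hn : 1 ≤ n) :
    wZero m n '' simpleSys m n (m * n) = (fun v => -v) '' stdSimple m n := by
  rw [final_sys m n hm hn]
  ext u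
  simp only [Set.mem_image, diffSet, stdSimple, Set.mem_union, Set.mem_setOf_eq,
    Set.mem_singleton_iff]
  constructor
  · rintro ⟨x, ⟨j, hj, rfl⟩, rfl⟩
    by_cases hc1 : j + 1 < n
    · refine ⟨ee m n (n - 2 - j) - ee m n (n - 2 - j + 1),
        Or.inr ⟨n - 2 - j, by omega, rfl⟩, ?_⟩
      rw [Dfin_lt m n j hm (by omega), Dfin_lt m n (j + 1) hm hc1, wZero_sub,
        wZero_ee m n j (by omega), wZero_ee m n (j + 1) (by omega), neg_sub,
        show n - 2 - j + 1 = n - 1 - j from by omega,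
        show n - 1 - (j + 1) = n - 2 - j from by omega]
    · by_cases hc2 : j + 1 = n
      · refine ⟨dd m n (m - 1) - ee m n 0, Or.inl (Or.inr rfl), ?_⟩
        rw [show j = n - 1 from by omega, show n - 1 + 1 = n from by omega,
          Dfin_lt m n (n - 1) hm (by omega), Dfin_ge m n n hm le_rfl,
          show n - n = 0 from by omega, wZero_sub, wZero_ee m n (n - 1) (by omega),
          wZero_dd m n 0 (by omega), show n - 1 - (n - 1) = 0 from by omega,
          show m - 1 - 0 = m - 1 from by omega, neg_sub]
      · refine ⟨dd m n (m - 2 - (j - n)) - dd m n (m - 2 - (j - n) + 1),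
          Or.inl (Or.inl ⟨m - 2 - (j - n), by omega, rfl⟩), ?_⟩
        rw [Dfin_ge m n j hm (by omega), Dfin_ge m n (j + 1) hm (by omega), wZero_sub,
          wZero_dd m n (j - n) (by omega), wZero_dd m n (j + 1 - n) (by omega), neg_sub,
          show m - 2 - (j - n) + 1 = m - 1 - (j - n) from by omega,
          show m - 1 - (j + 1 - n) = m - 2 - (j - n) from by omega]
  · rintro ⟨x, ((⟨s, hs, rfl⟩ | rfl) | ⟨t, ht, rfl⟩), rfl⟩
    · refine ⟨D m n (m - 1) n (n + (m - 2 - s)) - D m n (m - 1) n (n + (m - 2 - s) + 1),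
        ⟨n + (m - 2 - s), by omega, rfl⟩, ?_⟩
      rw [Dfin_ge m n (n + (m - 2 - s)) hm (by omega),
        Dfin_ge m n (n + (m - 2 - s) + 1) hm (by omega), wZero_sub,
        show n + (m - 2 - s) - n = m - 2 - s from by omega,
        show n + (m - 2 - s) + 1 - n = m - 1 - s from by omega,
        wZero_dd m n (m - 2 - s) (by omega), wZero_dd m n (m - 1 - s) (by omega), neg_sub,
        show m - 1 - (m - 2 - s) = s + 1 from by omega,
        show m - 1 - (m - 1 - s) = s from by omega]
    · refine ⟨D m n (m - 1) n (n - 1) - D m n (m - 1) n (n - 1 + 1),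
        ⟨n - 1, by omega, rfl⟩, ?_⟩
      rw [show n - 1 + 1 = n from by omega, Dfin_lt m n (n - 1) hm (by omega),
        Dfin_ge m n n hm le_rfl, show n - n = 0 from by omega, wZero_sub,
        wZero_ee m n (n - 1) (by omega), wZero_dd m n 0 (by omega),
        show n - 1 - (n - 1) = 0 from by omega, show m - 1 - 0 = m - 1 from by omega, neg_sub]
    · refine ⟨D m n (m - 1) n (n - 2 - t) - D m n (m - 1) n (n - 2 - t + 1),
        ⟨n - 2 - t, by omega, rfl⟩, ?_⟩
      rw [Dfin_lt m n (n - 2 - t) hm (by omega), Dfin_lt m n (n - 2 - t + 1) hm (by omega),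
        wZero_sub, wZero_ee m n (n - 2 - t) (by omega),
        wZero_ee m n (n - 2 - t + 1) (by omega), neg_sub,
        show n - 1 - (n - 2 - t) = t + 1 from by omega,
        show n - 1 - (n - 2 - t + 1) = t from by omega]
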